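/- Let Γ be a full-rank lattice in ℝ^m and let G be a finite group of linear isometries of ℝ^m with g(Γ) = Γ for every g ∈ G; let W̃ denote the group of affine transformations x ↦ g x + γ with g ∈ G, γ ∈ Γ. If x, y ∈ ℝ^m lie in different W̃-orbits (y ≠ g x + γ for all g ∈ G, γ ∈ Γ), then there exist finitely many functionals ℓ_1, …, ℓ_k in the dual lattice Γ* and complex numbers c_1, …, c_k such that the trigonometric polynomial p(z) = Σ_{j=1}^k c_j exp(2πi ℓ_j(z)) satisfies p(g z + γ) = p(z) for all z ∈ ℝ^m, g ∈ G, γ ∈ Γ, and p(x) ≠ p(y). That is, the W̃-invariant trigonometric polynomials associated to Γ separate the W̃-orbits in ℝ^m. -/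

import Mathlib

open scoped Real BigOperators

namespace SepTrig

variable {m : ℕ}

/-- membership in the dual lattice -/
def IsDual (Γ : AddSubgroup (EuclideanSpace ℝ (Fin m)))
    (ℓ : EuclideanSpace ℝ (Fin m) →ₗ[ℝ] ℝ) : Prop :=
  ∀ γ ∈ Γ, ∃ n : ℤ, ℓ γ = n

/-- the character associated to a functional -/
noncomputable def χ (ℓ : EuclideanSpace ℝ (Fin m) →ₗ[ℝ] ℝ)
    (z : EuclideanSpace ℝ (Fin m)) : ℂ :=
  Complex.exp (2 * π * Complex.I * (ℓ z))

/-- `p` is a trigonometric polynomial with frequencies in the dual lattice of `Γ` -/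
def IsTrig (Γ : AddSubgroup (EuclideanSpace ℝ (Fin m)))
    (p : EuclideanSpace ℝ (Fin m) → ℂ) : Prop :=
  ∃ (ι : Type) (_ : Fintype ι) (ℓ : ι → (EuclideanSpace ℝ (Fin m) →ₗ[ℝ] ℝ)) (c : ι → ℂ),
    (∀ i, IsDual Γ (ℓ i)) ∧ ∀ z, p z = ∑ i, c i * χ (ℓ i) z

variable {Γ : AddSubgroup (EuclideanSpace ℝ (Fin m))}

theorem IsDual.neg {ℓ} (h : IsDual Γ ℓ) : IsDual Γ (-ℓ) := fun γ hγ => by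
  obtain ⟨n, hn⟩ := h γ hγ
  exact ⟨-n, by simp [hn]⟩

theorem IsDual.char {ℓ} (h : IsDual Γ ℓ) (c : ℂ) : IsTrig Γ (fun z => c * χ ℓ z) :=
  ⟨Unit, inferInstance, fun _ => ℓ, fun _ => c, fun _ => h, fun z => by simp⟩

theorem IsTrig.const (c : ℂ) : IsTrig Γ (fun _ => c) :=
  ⟨Unit, inferInstance, fun _ => 0, fun _ => c, fun _ _ _ => ⟨0, by simp⟩,
    fun z => by simp [χ]⟩

theorem IsTrig.add {p q} (hp : IsTrig Γ p) (hq : IsTrig Γ q) :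
    IsTrig Γ (fun z => p z + q z) := by
  obtain ⟨ι, _, ℓ, c, hd, hs⟩ := hp
  obtain ⟨ι', _, ℓ', c', hd', hs'⟩ := hq
  refine ⟨ι ⊕ ι', inferInstance, Sum.elim ℓ ℓ', Sum.elim c c', ?_, fun z => ?_⟩
  · rintro (i | i) <;> [exact hd i; exact hd' i]
  · show p z + q z = _
    rw [hs z, hs' z, Fintype.sum_sum_type]; rfl

theorem IsTrig.mul {p q} (hp : IsTrig Γ p) (hq : IsTrig Γ q) :
    IsTrig Γ (fun z => p z * q z) := by
  obtain ⟨ι, _, ℓ, c, hd, hs⟩ := hp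
  obtain ⟨ι', _, ℓ', c', hd', hs'⟩ := hq
  refine ⟨ι × ι', inferInstance, fun i => ℓ i.1 + ℓ' i.2, fun i => c i.1 * c' i.2, ?_,
    fun z => ?_⟩
  · rintro ⟨i, j⟩ γ hγ
    obtain ⟨n, hn⟩ := hd i γ hγ
    obtain ⟨n', hn'⟩ := hd' j γ hγ
    exact ⟨n + n', by simp [hn, hn']⟩
  · show p z * q z = _
    rw [hs z, hs' z, Finset.sum_mul_sum, Fintype.sum_prod_type]
    refine Finset.sum_congr rfl fun i _ => Finset.sum_congr rfl fun j _ => ?_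
    simp only [χ, LinearMap.add_apply]
    rw [Complex.ofReal_add, mul_add, Complex.exp_add]
    ring

theorem IsTrig.finsetProd {α : Type*} (s : Finset α)
    (f : α → EuclideanSpace ℝ (Fin m) → ℂ) (h : ∀ a ∈ s, IsTrig Γ (f a)) :
    IsTrig Γ (fun z => ∏ a ∈ s, f a z) := by
  classical
  induction s using Finset.induction_on with
  | empty => simpa using IsTrig.const (Γ := Γ) 1
  | @insert a s hni ih =>
    simp only [Finset.prod_insert hni]
    exact (h a (Finset.mem_insert_self a s)).mul
      (ih fun b hb => h b (Finset.mem_insert_of_mem hb))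

theorem IsTrig.finsetSum {α : Type*} (s : Finset α)
    (f : α → EuclideanSpace ℝ (Fin m) → ℂ) (h : ∀ a ∈ s, IsTrig Γ (f a)) :
    IsTrig Γ (fun z => ∑ a ∈ s, f a z) := by
  classical
  induction s using Finset.induction_on with
  | empty => simpa using IsTrig.const (Γ := Γ) 0
  | @insert a s hni ih =>
    simp only [Finset.sum_insert hni]
    exact (h a (Finset.mem_insert_self a s)).add
      (ih fun b hb => h b (Finset.mem_insert_of_mem hb))

theorem IsTrig.comp {p} (hp : IsTrig Γ p)
    (g : EuclideanSpace ℝ (Fin m) ≃ₗᵢ[ℝ] EuclideanSpace ℝ (Fin m))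
    (hg : ∀ γ ∈ Γ, g γ ∈ Γ) : IsTrig Γ (fun z => p (g z)) := by
  obtain ⟨ι, _, ℓ, c, hd, hs⟩ := hp
  refine ⟨ι, inferInstance, fun i => (ℓ i).comp (g.toLinearEquiv : _ →ₗ[ℝ] _), c, ?_,
    fun z => ?_⟩
  · intro i γ hγ
    obtain ⟨n, hn⟩ := hd i (g γ) (hg γ hγ)
    exact ⟨n, by simpa using hn⟩
  · show p (g z) = _
    rw [hs (g z)]; rfl

theorem IsTrig.periodic {p} (hp : IsTrig Γ p) {γ} (hγ : γ ∈ Γ) (z) :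
    p (z + γ) = p z := by
  obtain ⟨ι, _, ℓ, c, hd, hs⟩ := hp
  rw [hs, hs]
  refine Finset.sum_congr rfl fun i _ => ?_
  obtain ⟨n, hn⟩ := hd i γ hγ
  simp only [χ, map_add, hn, Complex.ofReal_add, mul_add, Complex.exp_add,
    Complex.ofReal_intCast]
  rw [show (2 * ↑π * Complex.I * ↑n : ℂ) = ↑n * (2 * ↑π * Complex.I) by ring,
    Complex.exp_int_mul_two_pi_mul_I, mul_one]


theorem exists_dual_separating
    (hdisc : ∃ ε > 0, ∀ γ ∈ Γ, γ ≠ 0 → ε ≤ ‖γ‖)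
    (hspan : Submodule.span ℝ (Γ : Set (EuclideanSpace ℝ (Fin m))) = ⊤)
    {v : EuclideanSpace ℝ (Fin m)} (hv : v ∉ Γ) :
    ∃ ℓ, IsDual Γ ℓ ∧ ∀ n : ℤ, ℓ v ≠ n := by
  classical
  set L : Submodule ℤ (EuclideanSpace ℝ (Fin m)) := AddSubgroup.toIntSubmodule Γ with hLdef
  have hmem : ∀ w, w ∈ L ↔ w ∈ Γ := fun w => Iff.rfl
  have hdL : DiscreteTopology L := by
    obtain ⟨ε, hε, h⟩ := hdisc
    rw [discreteTopology_iff_isOpen_singleton_zero]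
    have hset : ({0} : Set L) = (Subtype.val) ⁻¹' (Metric.ball (0 : EuclideanSpace ℝ (Fin m)) ε) := by
      ext w
      simp only [Set.mem_singleton_iff, Set.mem_preimage, Metric.mem_ball, dist_zero_right]
      constructor
      · rintro rfl; simpa using hε
      · intro hw
        by_contra hne
        have : ε ≤ ‖(w : EuclideanSpace ℝ (Fin m))‖ :=
          h w ((hmem w).mp w.2) (fun h0 => hne (Subtype.ext h0))
        exact absurd hw (not_lt.mpr this)
    rw [hset]
    exact Metric.isOpen_ball.preimage continuous_subtype_val
  have hzl : IsZLattice ℝ L := ⟨hspan⟩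
  have hfin := ZLattice.module_finite ℝ L
  have hfree := ZLattice.module_free ℝ L
  let b := Module.Free.chooseBasis ℤ L
  let B := b.ofZLatticeBasis ℝ L
  have hdual : ∀ i, IsDual Γ (B.coord i) := by
    intro i γ hγ
    refine ⟨b.repr ⟨γ, (hmem γ).mpr hγ⟩ i, ?_⟩
    rw [Module.Basis.coord_apply]
    exact_mod_cast Module.Basis.ofZLatticeBasis_repr_apply ℝ L b ⟨γ, (hmem γ).mpr hγ⟩ i
  by_contra hcon
  push_neg at hcon
  have hint : ∀ i, ∃ k : ℤ, B.coord i v = k := fun i => hcon (B.coord i) (hdual i)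
  choose n hn using hint
  apply hv
  refine (hmem v).mp ?_
  have hv' : v = ∑ i, (n i : ℝ) • B i := by
    conv_lhs => rw [← B.sum_repr v]
    refine Finset.sum_congr rfl fun i _ => ?_
    rw [← Module.Basis.coord_apply, hn i]
  rw [hv']
  refine Submodule.sum_mem L fun i _ => ?_
  rw [Int.cast_smul_eq_zsmul ℝ]
  have hBi : B i ∈ L := by
    have : B i = (b i : EuclideanSpace ℝ (Fin m)) := Module.Basis.ofZLatticeBasis_apply ℝ L b i
    rw [this]; exact (b i).2
  exact Submodule.smul_mem L _ hBi


theorem IsTrig.congr {p q} (hp : IsTrig Γ p) (h : ∀ z, p z = q z) : IsTrig Γ q := by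
  obtain ⟨ι, _, ℓ, c, hd, hs⟩ := hp
  exact ⟨ι, inferInstance, ℓ, c, hd, fun z => (h z) ▸ hs z⟩

end SepTrig


open SepTrig

/-- The `W̃`-invariant trigonometric polynomials associated to a full-rank lattice `Γ`
(where `W̃` is the affine group of maps `z ↦ g z + γ`, `g` in a finite group `G` of linear
isometries preserving `Γ`, `γ ∈ Γ`) separate the `W̃`-orbits in `ℝ^m`. -/
theorem invariant_trig_polynomials_separate_affine_orbits
    (m : ℕ) (Γ : AddSubgroup (EuclideanSpace ℝ (Fin m)))
    (hdisc : ∃ ε > 0, ∀ γ ∈ Γ, γ ≠ 0 → ε ≤ ‖γ‖)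
    (hspan : Submodule.span ℝ (Γ : Set (EuclideanSpace ℝ (Fin m))) = ⊤)
    (G : Subgroup (EuclideanSpace ℝ (Fin m) ≃ₗᵢ[ℝ] EuclideanSpace ℝ (Fin m)))
    (hGfin : Finite G)
    (hGΓ : ∀ g ∈ G, ∀ γ ∈ Γ, g γ ∈ Γ)
    (x y : EuclideanSpace ℝ (Fin m))
    (hxy : ∀ g ∈ G, ∀ γ ∈ Γ, g x + γ ≠ y) :
    ∃ (k : ℕ) (ℓ : Fin k → (EuclideanSpace ℝ (Fin m) →ₗ[ℝ] ℝ)) (c : Fin k → ℂ)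
      (p : EuclideanSpace ℝ (Fin m) → ℂ),
      (∀ j, ∀ γ ∈ Γ, ∃ n : ℤ, ℓ j γ = n) ∧
      (p = fun z => ∑ j, c j * Complex.exp (2 * π * Complex.I * (ℓ j z))) ∧
      (∀ z : EuclideanSpace ℝ (Fin m), ∀ g ∈ G, ∀ γ ∈ Γ, p (g z + γ) = p z) ∧
      p x ≠ p y := by
  classical
  have : Fintype G := Fintype.ofFinite G
  -- x is not congruent to g y mod Γ
  have hnot : ∀ g : G,
      x - (g : EuclideanSpace ℝ (Fin m) ≃ₗᵢ[ℝ] EuclideanSpace ℝ (Fin m)) y ∉ Γ := by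
    intro g hmem
    set u : EuclideanSpace ℝ (Fin m) ≃ₗᵢ[ℝ] EuclideanSpace ℝ (Fin m) := ↑g with hu
    have hvG : u⁻¹ ∈ G := inv_mem g.2
    have hγ' : u⁻¹ (x - u y) ∈ Γ := hGΓ _ hvG _ hmem
    refine hxy u⁻¹ hvG (-(u⁻¹ (x - u y))) (neg_mem hγ') ?_
    have h5 : u⁻¹ (u y) = y := by simp [LinearIsometryEquiv.coe_inv]
    rw [map_sub, h5]
    abel
  have hsep : ∀ g : G, ∃ ℓ, IsDual Γ ℓ ∧
      ∀ n : ℤ, ℓ (x - (g : EuclideanSpace ℝ (Fin m) ≃ₗᵢ[ℝ] _) y) ≠ n :=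
    fun g => exists_dual_separating hdisc hspan (hnot g)
  choose L hLdual hLsep using hsep
  -- the separating invariant function
  set a : G → ℂ := fun g => χ (L g) ((g : EuclideanSpace ℝ (Fin m) ≃ₗᵢ[ℝ] _) y) with ha
  set q : EuclideanSpace ℝ (Fin m) → ℂ :=
    fun z => ∏ g : G, ((χ (L g) z - a g) * (χ (-(L g)) z - starRingEnd ℂ (a g))) with hq
  have hqtrig : IsTrig Γ q := by
    refine IsTrig.finsetProd Finset.univ _ fun g _ => ?_
    refine IsTrig.congr ((((hLdual g).char 1).add (IsTrig.const (-(a g)))).mul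
      ((((hLdual g).neg).char 1).add (IsTrig.const (-(starRingEnd ℂ (a g)))))) fun z => ?_
    ring
  -- conjugate character identity
  have hconj : ∀ (ℓ : EuclideanSpace ℝ (Fin m) →ₗ[ℝ] ℝ) (w),
      χ (-ℓ) w = starRingEnd ℂ (χ ℓ w) := by
    intro ℓ w
    simp only [χ]
    rw [← Complex.exp_conj]
    congr 1
    simp [Complex.ext_iff]
  -- realness of q
  have hqreal : ∀ w, q w = ((∏ g : G, Complex.normSq (χ (L g) w - a g) : ℝ) : ℂ) := by
    intro w
    rw [hq]
    push_cast
    refine Finset.prod_congr rfl fun g _ => ?_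
    rw [hconj, ← map_sub, Complex.mul_conj]
  -- q vanishes on the orbit of y
  have hqy : ∀ g : G, q ((g : EuclideanSpace ℝ (Fin m) ≃ₗᵢ[ℝ] _) y) = 0 := by
    intro g
    refine Finset.prod_eq_zero (Finset.mem_univ g) ?_
    rw [ha]
    simp
  set p0 : EuclideanSpace ℝ (Fin m) → ℂ :=
    fun z => ∑ g : G, q ((g : EuclideanSpace ℝ (Fin m) ≃ₗᵢ[ℝ] _) z) with hp0
  have hp0trig : IsTrig Γ p0 :=
    IsTrig.finsetSum Finset.univ _ fun g _ => hqtrig.comp _ (hGΓ _ g.2)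
  -- p0 y = 0
  have hp0y : p0 y = 0 := by
    rw [hp0]
    exact Finset.sum_eq_zero fun g _ => hqy g
  -- p0 x ≠ 0
  have hp0x : p0 x ≠ 0 := by
    rw [hp0]
    beta_reduce
    have hval : ∀ g : G, q ((g : EuclideanSpace ℝ (Fin m) ≃ₗᵢ[ℝ] _) x) =
        ((∏ g' : G, Complex.normSq
          (χ (L g') ((g : EuclideanSpace ℝ (Fin m) ≃ₗᵢ[ℝ] _) x) - a g') : ℝ) : ℂ) :=
      fun g => hqreal _
    rw [Finset.sum_congr rfl fun g _ => hval g, ← Complex.ofReal_sum]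
    rw [Complex.ofReal_ne_zero]
    have hpos : 0 < ∑ g : G, ∏ g' : G, Complex.normSq
        (χ (L g') ((g : EuclideanSpace ℝ (Fin m) ≃ₗᵢ[ℝ] _) x) - a g') := by
      refine Finset.sum_pos' (fun g _ => Finset.prod_nonneg fun g' _ => Complex.normSq_nonneg _)
        ⟨1, Finset.mem_univ _, ?_⟩
      refine Finset.prod_pos fun g' _ => ?_
      rw [Complex.normSq_pos]
      have h1 : ((1 : G) : EuclideanSpace ℝ (Fin m) ≃ₗᵢ[ℝ] _) x = x := by
        simp
      rw [h1, sub_ne_zero, ha]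
      intro heq
      simp only [χ] at heq
      rw [Complex.exp_eq_exp_iff_exists_int] at heq
      obtain ⟨n, hn⟩ := heq
      refine hLsep g' n ?_
      have h2 : (2 * (π : ℂ) * Complex.I) ≠ 0 := by
        simp [Real.pi_ne_zero, Complex.I_ne_zero]
      have h3 : ((L g' x : ℝ) : ℂ) =
          ((L g' ((g' : EuclideanSpace ℝ (Fin m) ≃ₗᵢ[ℝ] _) y) : ℝ) : ℂ) + n := by
        apply mul_left_cancel₀ h2
        rw [hn]; ring
      have h4 : L g' x = L g' (g'.1 y) + n := by exact_mod_cast h3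
      rw [map_sub, h4]
      ring
    exact ne_of_gt hpos
  -- invariance of p0
  have hp0inv : ∀ z, ∀ g ∈ G, ∀ γ ∈ Γ,
      p0 ((g : EuclideanSpace ℝ (Fin m) ≃ₗᵢ[ℝ] _) z + γ) = p0 z := by
    intro z g hg γ hγ
    rw [hp0]
    beta_reduce
    have step1 : ∀ g' : G, q (g'.1 (g z + γ)) =
        q ((g' * ⟨g, hg⟩ : G).1 z) := by
      intro g'
      have h4 : g'.1 (g z + γ) = (g' * ⟨g, hg⟩ : G).1 z + g'.1 γ := by
        simp [LinearIsometryEquiv.coe_mul]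
      rw [h4, hqtrig.periodic (hGΓ _ g'.2 γ hγ)]
    rw [Finset.sum_congr rfl fun g' _ => step1 g']
    exact Fintype.sum_equiv (Equiv.mulRight (⟨g, hg⟩ : G)) _ _ (fun g' => rfl)
  -- package everything
  obtain ⟨ι, hι, ℓ0, c0, hdual0, hsum⟩ := hp0trig
  set e := Fintype.equivFin ι with he
  refine ⟨Fintype.card ι, ℓ0 ∘ e.symm, c0 ∘ e.symm, _, fun j => hdual0 _, rfl, ?_, ?_⟩
  · intro z g hg γ hγ
    have hz : ∀ w, (∑ j, (c0 ∘ e.symm) j * Complex.exp (2 * π * Complex.I *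
        (((ℓ0 ∘ e.symm) j) w))) = p0 w := by
      intro w
      rw [hsum w]
      exact Equiv.sum_comp e.symm fun i => c0 i * χ (ℓ0 i) w
    simp only [hz]
    exact hp0inv z g hg γ hγ
  · have hz : ∀ w, (∑ j, (c0 ∘ e.symm) j * Complex.exp (2 * π * Complex.I *
        (((ℓ0 ∘ e.symm) j) w))) = p0 w := by
      intro w
      rw [hsum w]
      exact Equiv.sum_comp e.symm fun i => c0 i * χ (ℓ0 i) w
    simp only [hz, hp0y]
    exact hp0x
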